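/- The surfaces X = {xz − y² + 1 = 0} and Y = {x²z − y² + 1 = 0} in ℂ³ become isomorphic after taking a product with an affine line in the following weak sense verifiable at the level of point sets with the fibration structure: both X and Y admit surjections π_X, π_Y onto ℂ (the x-coordinate) such that all fibers over nonzero a ∈ ℂ are single free ℂ-orbits, and the fiber over 0 is a disjoint union of exactly two free ℂ-orbits. -/

import Mathlib

def actX (t : ℂ) (p : ℂ × ℂ × ℂ) : ℂ × ℂ × ℂ :=
  (p.1, p.2.1 + p.1 * t, p.2.2 + 2 * p.2.1 * t + p.1 * t ^ 2)

def actY (t : ℂ) (p : ℂ × ℂ × ℂ) : ℂ × ℂ × ℂ :=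
  (p.1, p.2.1 + p.1 ^ 2 * t, p.2.2 + 2 * p.2.1 * t + p.1 ^ 2 * t ^ 2)

def onX (p : ℂ × ℂ × ℂ) : Prop := p.1 * p.2.2 - p.2.1 ^ 2 + 1 = 0

def onY (p : ℂ × ℂ × ℂ) : Prop := p.1 ^ 2 * p.2.2 - p.2.1 ^ 2 + 1 = 0

/-- Both Danielewski surfaces `X = {xz − y² + 1 = 0}` and `Y = {x²z − y² + 1 = 0}`
fiber over the `x`-line with the same orbit structure for their additive
`ℂ`-actions: the projection to the first coordinate is surjective, the actions
are free (so every orbit is a free orbit), each fiber over `a ≠ 0` is a single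
orbit, and the fiber over `0` consists of exactly two orbits. -/
theorem danielewski_same_fibration_structure :
    -- π_X surjective
    (∀ a : ℂ, ∃ y z : ℂ, onX (a, y, z)) ∧
    -- the action on X is free
    (∀ (t : ℂ) (p : ℂ × ℂ × ℂ), onX p → actX t p = p → t = 0) ∧
    -- fibers of X over a ≠ 0 are single orbits
    (∀ a : ℂ, a ≠ 0 → ∀ p p' : ℂ × ℂ × ℂ, onX p → onX p' → p.1 = a → p'.1 = a →
      ∃ t : ℂ, actX t p = p') ∧
    -- the fiber of X over 0 is exactly two orbits
    (∃ p q : ℂ × ℂ × ℂ, onX p ∧ onX q ∧ p.1 = 0 ∧ q.1 = 0 ∧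
      (¬ ∃ t : ℂ, actX t p = q) ∧
      ∀ r : ℂ × ℂ × ℂ, onX r → r.1 = 0 →
        (∃ t : ℂ, actX t p = r) ∨ (∃ t : ℂ, actX t q = r)) ∧
    -- π_Y surjective
    (∀ a : ℂ, ∃ y z : ℂ, onY (a, y, z)) ∧
    -- the action on Y is free
    (∀ (t : ℂ) (p : ℂ × ℂ × ℂ), onY p → actY t p = p → t = 0) ∧
    -- fibers of Y over a ≠ 0 are single orbits
    (∀ a : ℂ, a ≠ 0 → ∀ p p' : ℂ × ℂ × ℂ, onY p → onY p' → p.1 = a → p'.1 = a →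
      ∃ t : ℂ, actY t p = p') ∧
    -- the fiber of Y over 0 is exactly two orbits
    (∃ p q : ℂ × ℂ × ℂ, onY p ∧ onY q ∧ p.1 = 0 ∧ q.1 = 0 ∧
      (¬ ∃ t : ℂ, actY t p = q) ∧
      ∀ r : ℂ × ℂ × ℂ, onY r → r.1 = 0 →
        (∃ t : ℂ, actY t p = r) ∨ (∃ t : ℂ, actY t q = r)) := by
  have hX0 : ∀ p : ℂ × ℂ × ℂ, onX p → p.1 = 0 → p.2.1 = 1 ∨ p.2.1 = -1 := by
    intro p hp h1
    unfold onX at hp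
    have h : (p.2.1 - 1) * (p.2.1 + 1) = 0 := by linear_combination -hp + p.2.2 * h1
    rcases mul_eq_zero.mp h with h | h
    · left; linear_combination h
    · right; linear_combination h
  have hY0 : ∀ p : ℂ × ℂ × ℂ, onY p → p.1 = 0 → p.2.1 = 1 ∨ p.2.1 = -1 := by
    intro p hp h1
    unfold onY at hp
    have h : (p.2.1 - 1) * (p.2.1 + 1) = 0 := by
      linear_combination -hp + p.2.2 * (p.1 + 0) * h1
    rcases mul_eq_zero.mp h with h | h
    · left; linear_combination h
    · right; linear_combination h
  refine ⟨?_, ?_, ?_, ?_, ?_, ?_, ?_, ?_⟩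
  · intro a; exact ⟨1, 0, by simp [onX]⟩
  · intro t p hp heq
    rw [Prod.ext_iff, Prod.ext_iff] at heq
    simp only [actX] at heq
    obtain ⟨-, h2, h3⟩ := heq
    have h2' : p.1 * t = 0 := by linear_combination h2
    rcases mul_eq_zero.mp h2' with hx | ht
    · have hy := hX0 p hp hx
      have h3' : 2 * p.2.1 * t + p.1 * t ^ 2 = 0 := by linear_combination h3
      rcases hy with hy | hy <;> rw [hy, hx] at h3' <;>
        · first | linear_combination h3' / 2 | linear_combination -h3' / 2
    · exact ht
  · intro a ha p p' hp hp' h1 h1'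
    set t : ℂ := (p'.2.1 - p.2.1) / a with htdef
    have hat : a * t = p'.2.1 - p.2.1 := by rw [htdef]; field_simp
    refine ⟨t, ?_⟩
    unfold onX at hp hp'
    rw [h1] at hp
    rw [h1'] at hp'
    have key : a * (p.2.2 + 2 * p.2.1 * t + p.1 * t ^ 2) = a * p'.2.2 := by
      rw [h1]
      linear_combination hp - hp' + (2 * p.2.1 + a * t + (p'.2.1 - p.2.1)) * hat
    refine Prod.ext (h1.trans h1'.symm) (Prod.ext ?_ ?_)
    · show p.2.1 + p.1 * t = p'.2.1
      rw [h1, hat]; ring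
    · exact mul_left_cancel₀ ha key
  · refine ⟨(0, 1, 0), (0, -1, 0), by simp [onX], by simp [onX], rfl, rfl, ?_, ?_⟩
    · rintro ⟨t, ht⟩
      simp only [actX, Prod.mk.injEq] at ht
      obtain ⟨-, h2, -⟩ := ht
      norm_num at h2
    · intro r hr h1
      rcases hX0 r hr h1 with hy | hy
      · left; refine ⟨r.2.2 / 2, ?_⟩
        simp only [actX, Prod.ext_iff]
        exact ⟨h1.symm, by rw [hy]; ring, by ring⟩
      · right; refine ⟨-(r.2.2 / 2), ?_⟩
        simp only [actX, Prod.ext_iff]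
        exact ⟨h1.symm, by rw [hy]; ring, by ring⟩
  · intro a; exact ⟨1, 0, by simp [onY]⟩
  · intro t p hp heq
    rw [Prod.ext_iff, Prod.ext_iff] at heq
    simp only [actY] at heq
    obtain ⟨-, h2, h3⟩ := heq
    have h2' : p.1 ^ 2 * t = 0 := by linear_combination h2
    rcases mul_eq_zero.mp h2' with hx | ht
    · have hx0 : p.1 = 0 := sq_eq_zero_iff.mp hx
      have hy := hY0 p hp hx0
      have h3' : 2 * p.2.1 * t + p.1 ^ 2 * t ^ 2 = 0 := by linear_combination h3
      rcases hy with hy | hy <;> rw [hy, hx0] at h3' <;>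
        · first | linear_combination h3' / 2 | linear_combination -h3' / 2
    · exact ht
  · intro a ha p p' hp hp' h1 h1'
    have ha2 : a ^ 2 ≠ 0 := pow_ne_zero _ ha
    set t : ℂ := (p'.2.1 - p.2.1) / a ^ 2 with htdef
    have hat : a ^ 2 * t = p'.2.1 - p.2.1 := by rw [htdef]; field_simp
    refine ⟨t, ?_⟩
    unfold onY at hp hp'
    rw [h1] at hp
    rw [h1'] at hp'
    have key : a ^ 2 * (p.2.2 + 2 * p.2.1 * t + p.1 ^ 2 * t ^ 2) = a ^ 2 * p'.2.2 := by
      rw [h1]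
      linear_combination hp - hp' + (2 * p.2.1 + a ^ 2 * t + (p'.2.1 - p.2.1)) * hat
    refine Prod.ext (h1.trans h1'.symm) (Prod.ext ?_ ?_)
    · show p.2.1 + p.1 ^ 2 * t = p'.2.1
      rw [h1, hat]; ring
    · exact mul_left_cancel₀ ha2 key
  · refine ⟨(0, 1, 0), (0, -1, 0), by simp [onY], by simp [onY], rfl, rfl, ?_, ?_⟩
    · rintro ⟨t, ht⟩
      simp only [actY, Prod.mk.injEq] at ht
      obtain ⟨-, h2, -⟩ := ht
      norm_num at h2
    · intro r hr h1
      rcases hY0 r hr h1 with hy | hy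
      · left; refine ⟨r.2.2 / 2, ?_⟩
        simp only [actY, Prod.ext_iff]
        exact ⟨h1.symm, by rw [hy]; ring, by ring⟩
      · right; refine ⟨-(r.2.2 / 2), ?_⟩
        simp only [actY, Prod.ext_iff]
        exact ⟨h1.symm, by rw [hy]; ring, by ring⟩
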